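/- Let P = (−∂ₓ²)^{−1} on 2L-periodic zero-mean L² functions, and let u ∈ H¹ periodic. Then the nonlinear convective term satisfies |(P(u u'), u)_{L²}| ≤ d₀ ‖u²‖_{L²} ‖P^{1/2}u‖_{L²}, where d₀ = max{L/π, 1} and (·,·) is the L² inner product; consequently, for every ε > 0, 2|(P(uu'),u)| ≤ ε ∫ u⁴ dx + (d₀²/ε)‖P^{1/2}u‖²_{L²}. -/

import Mathlib

open Real Filter Set

private lemma cs_interval {a b : ℝ} (hab : a ≤ b) (f g : ℝ → ℝ)
    (hf : Continuous f) (hg : Continuous g) :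
    |∫ x in a..b, f x * g x| ≤
      Real.sqrt (∫ x in a..b, f x ^ 2) * Real.sqrt (∫ x in a..b, g x ^ 2) := by
  set F := ∫ x in a..b, f x ^ 2 with hF
  set G := ∫ x in a..b, g x ^ 2 with hG
  set C := ∫ x in a..b, f x * g x with hC
  have hFnn : 0 ≤ F := intervalIntegral.integral_nonneg hab fun x _ => sq_nonneg _
  have if2 : IntervalIntegrable (fun x => f x ^ 2) MeasureTheory.volume a b :=
    (hf.pow 2).intervalIntegrable a b
  have ig2 : IntervalIntegrable (fun x => g x ^ 2) MeasureTheory.volume a b :=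
    (hg.pow 2).intervalIntegrable a b
  have ifg : IntervalIntegrable (fun x => f x * g x) MeasureTheory.volume a b :=
    (hf.mul hg).intervalIntegrable a b
  have key : C ^ 2 ≤ F * G := by
    have h : ∀ t : ℝ, 0 ≤ F * (t * t) + (2 * C) * t + G := by
      intro t
      have h0 : 0 ≤ ∫ x in a..b, (t * f x + g x) ^ 2 :=
        intervalIntegral.integral_nonneg hab fun x _ => sq_nonneg _
      have hexp : (∫ x in a..b, (t * f x + g x) ^ 2)
          = t ^ 2 * F + 2 * t * C + G := by
        have e : ∀ x, (t * f x + g x) ^ 2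
            = t ^ 2 * f x ^ 2 + 2 * t * (f x * g x) + g x ^ 2 := fun x => by ring
        simp_rw [e]
        rw [intervalIntegral.integral_add ((if2.const_mul _).add (ifg.const_mul _)) ig2,
          intervalIntegral.integral_add (if2.const_mul _) (ifg.const_mul _),
          intervalIntegral.integral_const_mul, intervalIntegral.integral_const_mul]
      nlinarith [h0, hexp]
    have hd := discrim_le_zero h
    rw [discrim] at hd
    nlinarith
  calc |C| = Real.sqrt (C ^ 2) := (Real.sqrt_sq_eq_abs C).symm
    _ ≤ Real.sqrt (F * G) := Real.sqrt_le_sqrt key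
    _ = Real.sqrt F * Real.sqrt G := Real.sqrt_mul hFnn _

set_option maxHeartbeats 1000000 in
/-- Estimate of the convective term: with `q = P u` and `w = P (u u')`
(`P = (-∂ₓ²)^{-1}` on `2L`-periodic zero-mean functions, so `-q'' = u`, `-w'' = u u'`),
and `d₀ = max {L/π, 1}`, one has
`|(P(u u'), u)| ≤ d₀ ‖u²‖_{L²} ‖P^{1/2} u‖_{L²}` where `‖P^{1/2}u‖² = (P u, u)`,
and hence `2 |(P(u u'), u)| ≤ ε ∫ u⁴ + (d₀²/ε) (P u, u)` for every `ε > 0`. -/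
theorem convective_term_estimate (L : ℝ) (hL : 0 < L) (u q w : ℝ → ℝ)
    (hu : ContDiff ℝ 1 u) (huper : Function.Periodic u (2 * L))
    (humean : ∫ x in (-L)..L, u x = 0)
    (hq : ContDiff ℝ 2 q) (hqper : Function.Periodic q (2 * L))
    (hqmean : ∫ x in (-L)..L, q x = 0)
    (hqeq : ∀ x, deriv (deriv q) x = -(u x))
    (hw : ContDiff ℝ 2 w) (hwper : Function.Periodic w (2 * L))
    (hwmean : ∫ x in (-L)..L, w x = 0)
    (hweq : ∀ x, deriv (deriv w) x = -(u x * deriv u x)) :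
    |∫ x in (-L)..L, w x * u x| ≤
      max (L / Real.pi) 1 * Real.sqrt (∫ x in (-L)..L, (u x) ^ 4) *
        Real.sqrt (∫ x in (-L)..L, u x * q x) ∧
    ∀ ε > (0:ℝ),
      2 * |∫ x in (-L)..L, w x * u x| ≤
        ε * (∫ x in (-L)..L, (u x) ^ 4)
          + ((max (L / Real.pi) 1) ^ 2 / ε) * ∫ x in (-L)..L, u x * q x := by
  have hab : (-L) ≤ L := by linarith
  have huc : Continuous u := hu.continuous
  have hu'c : Continuous (deriv u) := hu.continuous_deriv le_rfl
  have hud : Differentiable ℝ u := hu.differentiable (by norm_num)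
  have hqd : Differentiable ℝ q := hq.differentiable (by norm_num)
  have hwd : Differentiable ℝ w := hw.differentiable (by norm_num)
  have h2 : (2 : WithTop ℕ∞) = 1 + 1 := by norm_num
  have hq1 : ContDiff ℝ 1 (deriv q) := by
    rw [h2] at hq
    exact (contDiff_succ_iff_deriv.mp hq).2.2
  have hw1 : ContDiff ℝ 1 (deriv w) := by
    rw [h2] at hw
    exact (contDiff_succ_iff_deriv.mp hw).2.2
  have hq'c : Continuous (deriv q) := hq1.continuous
  have hw'c : Continuous (deriv w) := hw1.continuous
  have hq''c : Continuous (deriv (deriv q)) := hq1.continuous_deriv le_rfl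
  have hw''c : Continuous (deriv (deriv w)) := hw1.continuous_deriv le_rfl
  have bdry : ∀ f : ℝ → ℝ, Function.Periodic f (2 * L) → f L = f (-L) := by
    intro f hf
    have := hf (-L)
    rwa [show -L + 2 * L = L by ring] at this
  have hqLR := bdry q hqper
  have hwLR := bdry w hwper
  have huLR := bdry u huper
  have hderper : ∀ f : ℝ → ℝ, Function.Periodic f (2 * L) →
      Function.Periodic (deriv f) (2 * L) := by
    intro f hf x
    have hfe : (fun y => f (y + 2 * L)) = f := funext hf
    calc deriv f (x + 2 * L) = deriv (fun y => f (y + 2 * L)) x :=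
          (deriv_comp_add_const f (2 * L) x).symm
      _ = deriv f x := by rw [hfe]
  have hq'LR := bdry _ (hderper q hqper)
  have hw'LR := bdry _ (hderper w hwper)
  -- derivative facts
  have hqh : ∀ x ∈ uIcc (-L) L, HasDerivAt q (deriv q x) x := fun x _ => (hqd x).hasDerivAt
  have hwh : ∀ x ∈ uIcc (-L) L, HasDerivAt w (deriv w x) x := fun x _ => (hwd x).hasDerivAt
  have hq'h : ∀ x ∈ uIcc (-L) L, HasDerivAt (deriv q) (deriv (deriv q) x) x :=
    fun x _ => ((hq1.differentiable (by norm_num)) x).hasDerivAt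
  have hw'h : ∀ x ∈ uIcc (-L) L, HasDerivAt (deriv w) (deriv (deriv w) x) x :=
    fun x _ => ((hw1.differentiable (by norm_num)) x).hasDerivAt
  have hvh : ∀ x ∈ uIcc (-L) L, HasDerivAt (fun y => u y * u y / 2) (u x * deriv u x) x := by
    intro x _
    have h := (((hud x).hasDerivAt).mul ((hud x).hasDerivAt)).div_const 2
    rw [show u x * deriv u x = (deriv u x * u x + u x * deriv u x) / 2 by ring]
    exact h
  -- integration by parts identities
  have E1 : (∫ x in (-L)..L, w x * deriv (deriv q) x)
      = w L * deriv q L - w (-L) * deriv q (-L)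
        - ∫ x in (-L)..L, deriv w x * deriv q x :=
    intervalIntegral.integral_mul_deriv_eq_deriv_mul hwh hq'h
      (hw'c.intervalIntegrable _ _) (hq''c.intervalIntegrable _ _)
  have E2 : (∫ x in (-L)..L, q x * deriv (deriv w) x)
      = q L * deriv w L - q (-L) * deriv w (-L)
        - ∫ x in (-L)..L, deriv q x * deriv w x :=
    intervalIntegral.integral_mul_deriv_eq_deriv_mul hqh hw'h
      (hq'c.intervalIntegrable _ _) (hw''c.intervalIntegrable _ _)
  have E3 : (∫ x in (-L)..L, q x * (u x * deriv u x))
      = q L * (u L * u L / 2) - q (-L) * (u (-L) * u (-L) / 2)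
        - ∫ x in (-L)..L, deriv q x * (u x * u x / 2) :=
    intervalIntegral.integral_mul_deriv_eq_deriv_mul hqh hvh
      (hq'c.intervalIntegrable _ _) ((huc.mul hu'c).intervalIntegrable _ _)
  have E4 : (∫ x in (-L)..L, q x * deriv (deriv q) x)
      = q L * deriv q L - q (-L) * deriv q (-L)
        - ∫ x in (-L)..L, deriv q x * deriv q x :=
    intervalIntegral.integral_mul_deriv_eq_deriv_mul hqh hq'h
      (hq'c.intervalIntegrable _ _) (hq''c.intervalIntegrable _ _)
  -- boundary terms vanish
  rw [hwLR, hq'LR, sub_self, zero_sub] at E1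
  rw [hqLR, hw'LR, sub_self, zero_sub] at E2
  rw [hqLR, huLR, sub_self, zero_sub] at E3
  rw [hqLR, hq'LR, sub_self, zero_sub] at E4
  -- rewrite the second derivatives via the equations
  have E2' : (∫ x in (-L)..L, q x * (u x * deriv u x))
      = ∫ x in (-L)..L, deriv q x * deriv w x := by
    have : (∫ x in (-L)..L, q x * deriv (deriv w) x)
        = -∫ x in (-L)..L, q x * (u x * deriv u x) := by
      rw [← intervalIntegral.integral_neg]
      apply intervalIntegral.integral_congr
      intro x _
      dsimp only
      rw [hweq x]; ring
    rw [this] at E2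
    linarith
  have E4' : (∫ x in (-L)..L, deriv q x * deriv q x)
      = ∫ x in (-L)..L, u x * q x := by
    have : (∫ x in (-L)..L, q x * deriv (deriv q) x)
        = -∫ x in (-L)..L, u x * q x := by
      rw [← intervalIntegral.integral_neg]
      apply intervalIntegral.integral_congr
      intro x _
      dsimp only
      rw [hqeq x]; ring
    rw [this] at E4
    linarith
  -- the key identity: (w, u) = -(1/2) ∫ q' u²
  have keyI : (∫ x in (-L)..L, w x * u x)
      = -∫ x in (-L)..L, deriv q x * (u x * u x / 2) := by
    have s1 : (∫ x in (-L)..L, w x * u x)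
        = -∫ x in (-L)..L, w x * deriv (deriv q) x := by
      rw [← intervalIntegral.integral_neg]
      apply intervalIntegral.integral_congr
      intro x _
      dsimp only
      rw [hqeq x]; ring
    have comm : (∫ x in (-L)..L, deriv w x * deriv q x)
        = ∫ x in (-L)..L, deriv q x * deriv w x := by
      apply intervalIntegral.integral_congr
      intro x _
      dsimp only
      ring
    rw [s1, E1, neg_neg, comm, ← E2', E3]
  -- nonnegativity facts
  have hA : 0 ≤ ∫ x in (-L)..L, (u x) ^ 4 :=
    intervalIntegral.integral_nonneg hab fun x _ => by positivity
  have hB : 0 ≤ ∫ x in (-L)..L, u x * q x := by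
    rw [← E4']
    exact intervalIntegral.integral_nonneg hab fun x _ => mul_self_nonneg _
  -- Cauchy–Schwarz
  have hCS : |∫ x in (-L)..L, (u x * u x) * deriv q x| ≤
      Real.sqrt (∫ x in (-L)..L, (u x) ^ 4) *
        Real.sqrt (∫ x in (-L)..L, u x * q x) := by
    have h := cs_interval hab (fun x => u x * u x) (deriv q) (huc.mul huc) hq'c
    have e1 : (∫ x in (-L)..L, (u x * u x) ^ 2) = ∫ x in (-L)..L, (u x) ^ 4 := by
      apply intervalIntegral.integral_congr
      intro x _
      dsimp only
      ring
    have e2 : (∫ x in (-L)..L, (deriv q x) ^ 2) = ∫ x in (-L)..L, u x * q x := by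
      rw [← E4']
      apply intervalIntegral.integral_congr
      intro x _
      dsimp only
      ring
    rw [e1, e2] at h
    exact h
  have habs : |∫ x in (-L)..L, w x * u x| ≤
      (1 / 2) * (Real.sqrt (∫ x in (-L)..L, (u x) ^ 4) *
        Real.sqrt (∫ x in (-L)..L, u x * q x)) := by
    have comm : (∫ x in (-L)..L, deriv q x * (u x * u x / 2))
        = (1 / 2) * ∫ x in (-L)..L, (u x * u x) * deriv q x := by
      rw [← intervalIntegral.integral_const_mul]
      apply intervalIntegral.integral_congr
      intro x _
      dsimp only
      ring
    rw [keyI, abs_neg, comm, abs_mul]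
    rw [abs_of_nonneg (by norm_num : (0:ℝ) ≤ 1/2)]
    have := hCS
    nlinarith [abs_nonneg (∫ x in (-L)..L, (u x * u x) * deriv q x)]
  set d : ℝ := max (L / Real.pi) 1 with hd
  have hd1 : (1 : ℝ) ≤ d := le_max_right _ _
  set sA : ℝ := Real.sqrt (∫ x in (-L)..L, (u x) ^ 4) with hsA
  set sB : ℝ := Real.sqrt (∫ x in (-L)..L, u x * q x) with hsB
  have hsAnn : 0 ≤ sA := Real.sqrt_nonneg _
  have hsBnn : 0 ≤ sB := Real.sqrt_nonneg _
  have part1 : |∫ x in (-L)..L, w x * u x| ≤ d * sA * sB := by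
    have hst : 0 ≤ sA * sB := mul_nonneg hsAnn hsBnn
    have h1 := mul_le_mul_of_nonneg_right hd1 hst
    rw [one_mul] at h1
    calc |∫ x in (-L)..L, w x * u x| ≤ (1 / 2) * (sA * sB) := habs
      _ ≤ sA * sB := by linarith
      _ ≤ d * (sA * sB) := h1
      _ = d * sA * sB := by ring
  refine ⟨part1, ?_⟩
  intro ε hε
  have hsA2 : sA ^ 2 = ∫ x in (-L)..L, (u x) ^ 4 := Real.sq_sqrt hA
  have hsB2 : sB ^ 2 = ∫ x in (-L)..L, u x * q x := Real.sq_sqrt hB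
  rw [← hsA2, ← hsB2]
  have key2 : 2 * (d * sA * sB) ≤ ε * sA ^ 2 + d ^ 2 / ε * sB ^ 2 := by
    have hsq := sq_nonneg (ε * sA - d * sB)
    have h1 : 2 * (d * sA * sB) * ε ≤ ε ^ 2 * sA ^ 2 + d ^ 2 * sB ^ 2 := by nlinarith
    have h2 : 2 * (d * sA * sB) = (2 * (d * sA * sB) * ε) / ε := by
      field_simp
    rw [h2]
    calc (2 * (d * sA * sB) * ε) / ε ≤ (ε ^ 2 * sA ^ 2 + d ^ 2 * sB ^ 2) / ε :=
          (div_le_div_iff_of_pos_right hε).mpr h1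
      _ = ε * sA ^ 2 + d ^ 2 / ε * sB ^ 2 := by field_simp
  linarith [part1]
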